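/- Let V be a finite set of discrete random variables with a positive joint distribution P, and G a DAG over V. If for every variable X ∈ V, P(X | nd(X)) = P(X | pa_G(X)) (the local Markov condition), then P factorizes according to G: P(V) = ∏_{X∈V} P(X | pa_G(X)). -/
import Mathlib


open scoped Classical
open Finset

variable {ι : Type*} [Fintype ι] [DecidableEq ι] {val : ι → Type*} [∀ i, Fintype (val i)]

/-- The marginal probability `P(S = ω|S)`: the total probability of all full assignments
agreeing with `ω` on `S`. -/
noncomputable def marg (P : (∀ i, val i) → ℝ) (S : Finset ι) (ω : ∀ i, val i) : ℝ :=
  ∑ ω' : ∀ i, val i, if ∀ i ∈ S, ω' i = ω i then P ω' else 0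

/-- The conditional probability `P(S = ω|S ∣ T = ω|T)`, defined as a ratio of marginals. -/
noncomputable def pcond (P : (∀ i, val i) → ℝ) (S T : Finset ι) (ω : ∀ i, val i) : ℝ :=
  marg P (S ∪ T) ω / marg P T ω

/-- The parents of `i` in the graph with edge relation `E`. -/
noncomputable def pa (E : ι → ι → Prop) (i : ι) : Finset ι :=
  Finset.univ.filter fun j => E j i

/-- The non-descendants of `i` (other than `i`): vertices `j ≠ i` such that `i` is not an
ancestor of `j`. -/
noncomputable def nd (E : ι → ι → Prop) (i : ι) : Finset ι :=
  Finset.univ.filter fun j => j ≠ i ∧ ¬ Relation.ReflTransGen E i j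

section Aux

variable (P : (∀ i, val i) → ℝ)

lemma marg_pos (hpos : ∀ ω, 0 < P ω) (S : Finset ι) (ω : ∀ i, val i) :
    0 < marg P S ω := by
  unfold marg
  apply Finset.sum_pos'
  · intro ω' _
    split
    · exact (hpos ω').le
    · exact le_refl _
  · exact ⟨ω, Finset.mem_univ ω, by simp [hpos ω]⟩

lemma marg_congr {S : Finset ι} {ω ω'' : ∀ i, val i}
    (h : ∀ i ∈ S, ω i = ω'' i) : marg P S ω = marg P S ω'' := by
  unfold marg
  refine Finset.sum_congr rfl fun ω' _ => ?_
  refine if_congr ?_ rfl rfl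
  constructor
  · intro hh i hi; rw [hh i hi, h i hi]
  · intro hh i hi; rw [hh i hi, ← h i hi]

lemma marg_empty (hsum : ∑ ω, P ω = 1) (ω : ∀ i, val i) : marg P ∅ ω = 1 := by
  simp [marg, hsum]

lemma marg_univ (ω : ∀ i, val i) : marg P Finset.univ ω = P ω := by
  unfold marg
  rw [Finset.sum_eq_single ω]
  · simp
  · intro b _ hb
    rw [if_neg]
    intro h
    exact hb (funext fun i => h i (Finset.mem_univ i))
  · intro h; exact absurd (Finset.mem_univ ω) h

/-- Law of total probability: summing a marginal over all ways to extend the assignment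
from `S` to `T`. -/
lemma marg_sum_patch (S T : Finset ι) (hST : S ⊆ T) (ω : ∀ i, val i) :
    marg P S ω = ∑ g : (∀ j : {j // j ∈ T \ S}, val j),
      marg P T (fun i => if h : i ∈ T \ S then g ⟨i, h⟩ else ω i) := by
  unfold marg
  rw [Finset.sum_comm]
  refine Finset.sum_congr rfl fun ω' _ => ?_
  by_cases hC : ∀ i ∈ S, ω' i = ω i
  · rw [if_pos hC]
    have hiff : ∀ g : (∀ j : {j // j ∈ T \ S}, val j),
        (∀ i ∈ T, ω' i = if h : i ∈ T \ S then g ⟨i, h⟩ else ω i) ↔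
          g = fun (j : {j // j ∈ T \ S}) => ω' j.1 := by
      intro g
      constructor
      · intro h
        apply funext
        rintro ⟨j, hjm⟩
        have hj : j ∈ T := (Finset.mem_sdiff.mp hjm).1
        have h' : ω' j = g ⟨j, hjm⟩ := by
          simpa only [dif_pos hjm] using h j hj
        exact h'.symm
      · rintro rfl i hi
        by_cases hmem : i ∈ T \ S
        · rw [dif_pos hmem]
        · rw [dif_neg hmem]
          have hiS : i ∈ S := by
            by_contra hiS
            exact hmem (Finset.mem_sdiff.mpr ⟨hi, hiS⟩)
          exact hC i hiS
    calc P ω'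
      _ = ∑ g : (∀ j : {j // j ∈ T \ S}, val j),
            if g = (fun (j : {j // j ∈ T \ S}) => ω' j.1) then P ω' else 0 := by
          rw [Finset.sum_ite_eq' Finset.univ (fun j : {j // j ∈ T \ S} => ω' j.1)
            (fun _ => P ω'), if_pos (Finset.mem_univ _)]
      _ = _ := Finset.sum_congr rfl fun g _ => (if_congr (hiff g) rfl rfl).symm
  · rw [if_neg hC]
    rw [Finset.sum_eq_zero]
    intro g _
    rw [if_neg]
    intro h
    apply hC
    intro i hi
    have hiT : i ∈ T := hST hi
    have hnm : i ∉ T \ S := fun hmem => (Finset.mem_sdiff.mp hmem).2 hi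
    simpa only [dif_neg hnm] using h i hiT

/-- Conditional independence propagation: if `P(i ∣ N) = P(i ∣ A)` pointwise and
`A ⊆ S ⊆ N` with `i ∉ N`, then `P(i ∣ S) = P(i ∣ A)`. -/
lemma pcond_subset (hpos : ∀ ω, 0 < P ω) (i : ι) (A S N : Finset ι)
    (hAS : A ⊆ S) (hSN : S ⊆ N) (hiN : i ∉ N)
    (hlm : ∀ τ, pcond P {i} N τ = pcond P {i} A τ) (ω : ∀ i, val i) :
    pcond P {i} S ω = pcond P {i} A ω := by
  have hiS : i ∉ S := fun h => hiN (hSN h)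
  have hD : ({i} ∪ N) \ ({i} ∪ S) = N \ S := by
    ext j
    simp only [Finset.mem_sdiff, Finset.mem_union, Finset.mem_singleton]
    constructor
    · rintro ⟨hj1 | hj1, hj2⟩
      · exact absurd (Or.inl hj1) hj2
      · exact ⟨hj1, fun hjS => hj2 (Or.inr hjS)⟩
    · rintro ⟨hj1, hj2⟩
      refine ⟨Or.inr hj1, ?_⟩
      rintro (rfl | hjS)
      · exact hiN hj1
      · exact hj2 hjS
  set r : ℝ := marg P ({i} ∪ A) ω / marg P A ω with hr
  have key : ∀ g : (∀ j : {j // j ∈ N \ S}, val j),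
      marg P ({i} ∪ N) (fun j => if h : j ∈ N \ S then g ⟨j, h⟩ else ω j) =
        r * marg P N (fun j => if h : j ∈ N \ S then g ⟨j, h⟩ else ω j) := by
    intro g
    set τ : ∀ j, val j := fun j => if h : j ∈ N \ S then g ⟨j, h⟩ else ω j with hτ
    have hagree : ∀ j ∈ ({i} : Finset ι) ∪ A, τ j = ω j := by
      intro j hj
      rcases Finset.mem_union.mp hj with hj | hj
      · rw [Finset.mem_singleton] at hj
        subst hj
        exact dif_neg fun h => hiN (Finset.mem_sdiff.mp h).1
      · exact dif_neg fun h => (Finset.mem_sdiff.mp h).2 (hAS hj)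
    have h1 := hlm τ
    unfold pcond at h1
    have h2 : marg P ({i} ∪ A) τ = marg P ({i} ∪ A) ω :=
      marg_congr P hagree
    have h3 : marg P A τ = marg P A ω :=
      marg_congr P fun j hj => hagree j (Finset.mem_union_right _ hj)
    rw [h2, h3] at h1
    have hNpos := marg_pos P hpos N τ
    have hApos := marg_pos P hpos A ω
    rw [hr]
    rw [div_eq_div_iff hNpos.ne' hApos.ne'] at h1
    field_simp
    linarith [h1]
  have hsub1 : ({i} : Finset ι) ∪ S ⊆ {i} ∪ N :=
    Finset.union_subset_union_right hSN
  have h1 := marg_sum_patch P ({i} ∪ S) ({i} ∪ N) hsub1 ω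
  rw [hD] at h1
  have h2 := marg_sum_patch P S N hSN ω
  have h3 : marg P ({i} ∪ S) ω = r * marg P S ω := by
    rw [h1, h2, Finset.mul_sum]
    exact Finset.sum_congr rfl fun g _ => key g
  unfold pcond
  rw [h3, hr]
  have hSpos := marg_pos P hpos S ω
  rw [mul_div_assoc, div_self hSpos.ne', mul_one]

end Aux

/-- If a positive joint distribution `P` over finitely many finite-valued variables
satisfies the local Markov condition `P(X ∣ nd(X)) = P(X ∣ pa(X))` with respect to a DAG
`G`, then `P` factorizes according to `G`. -/
theorem factorization_of_local_markov (E : ι → ι → Prop)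
    (hacyc : ∀ i, ¬ Relation.TransGen E i i)
    (P : (∀ i, val i) → ℝ) (hpos : ∀ ω, 0 < P ω) (hsum : ∑ ω, P ω = 1)
    (hlm : ∀ (i : ι) (ω : ∀ i, val i), pcond P {i} (nd E i) ω = pcond P {i} (pa E i) ω) :
    ∀ ω, P ω = ∏ i, pcond P {i} (pa E i) ω := by
  suffices h : ∀ U : Finset ι, (∀ i ∈ U, pa E i ⊆ U) → ∀ ω,
      marg P U ω = ∏ i ∈ U, pcond P {i} (pa E i) ω by
    intro ω
    have := h Finset.univ (fun i _ => Finset.subset_univ _) ω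
    rwa [marg_univ] at this
  intro U
  induction U using Finset.strongInduction with
  | _ U ih =>
    intro hclosed ω
    rcases U.eq_empty_or_nonempty with rfl | hne
    · simp [marg_empty P hsum]
    · -- pick a maximal element of U
      haveI : IsTrans ι (fun a b => Relation.TransGen E b a) :=
        ⟨fun _ _ _ h1 h2 => h2.trans h1⟩
      haveI : IsIrrefl ι (fun a b => Relation.TransGen E b a) :=
        ⟨fun a h => hacyc a h⟩
      have hwf := Finite.wellFounded_of_trans_of_irrefl
        (fun a b : ι => Relation.TransGen E b a)
      obtain ⟨i, hiU, hmax⟩ := hwf.has_min ↑U (by exact_mod_cast hne)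
      have hiU : i ∈ U := hiU
      have hmax' : ∀ j ∈ U, ¬ Relation.TransGen E i j := fun j hj h => hmax j hj h
      have hiE : ¬ E i i := fun h => hacyc i (Relation.TransGen.single h)
      have hpaErase : pa E i ⊆ U.erase i := by
        intro j hj
        have hEji : E j i := (Finset.mem_filter.mp hj).2
        have hjU : j ∈ U := hclosed i hiU hj
        refine Finset.mem_erase.mpr ⟨?_, hjU⟩
        rintro rfl
        exact hiE hEji
      have hiNd : i ∉ nd E i := by simp [nd]
      have hndErase : U.erase i ⊆ nd E i := by
        intro j hj
        obtain ⟨hji, hjU⟩ := Finset.mem_erase.mp hj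
        refine Finset.mem_filter.mpr ⟨Finset.mem_univ _, hji, ?_⟩
        intro hrt
        rcases (Relation.reflTransGen_iff_eq_or_transGen.mp hrt) with rfl | ht
        · exact hji rfl
        · exact hmax' j hjU ht
      have hpaNd : pa E i ⊆ nd E i := by
        intro j hj
        have hEji : E j i := (Finset.mem_filter.mp hj).2
        refine Finset.mem_filter.mpr ⟨Finset.mem_univ _, ?_, ?_⟩
        · rintro rfl; exact hiE hEji
        · intro hrt
          exact hacyc i (Relation.TransGen.tail' hrt hEji)
      have hErClosed : ∀ j ∈ U.erase i, pa E j ⊆ U.erase i := by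
        intro j hj k hk
        obtain ⟨hji, hjU⟩ := Finset.mem_erase.mp hj
        have hkU : k ∈ U := hclosed j hjU hk
        refine Finset.mem_erase.mpr ⟨?_, hkU⟩
        rintro rfl
        exact hmax' j hjU (Relation.TransGen.single (Finset.mem_filter.mp hk).2)
      have hUeq : ({i} : Finset ι) ∪ U.erase i = U := by
        rw [← Finset.insert_eq, Finset.insert_erase hiU]
      have hstep : marg P U ω = pcond P {i} (U.erase i) ω * marg P (U.erase i) ω := by
        unfold pcond
        rw [hUeq, div_mul_cancel₀]
        exact (marg_pos P hpos _ ω).ne'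
      have hcondeq : pcond P {i} (U.erase i) ω = pcond P {i} (pa E i) ω :=
        pcond_subset P hpos i (pa E i) (U.erase i) (nd E i)
          hpaErase hndErase hiNd (fun τ => hlm i τ) ω
      rw [hstep, hcondeq, ih (U.erase i) (Finset.erase_ssubset hiU) hErClosed ω]
      exact Finset.mul_prod_erase U (fun j => pcond P {j} (pa E j) ω) hiU
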